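/- Let N ≥ 2, α > 0, and let l, l′ be real numbers with l > l′ > −N − α. Then for every measurable set M ⊂ ℝ^N_+ with 0 < μ_{l,α}(M) < +∞ one has μ_{l,α}(M)^{1/(l+N+α)} / μ_{l′,α}(M)^{1/(l′+N+α)} ≥ μ_{l,α}(M⋆)^{1/(l+N+α)} / μ_{l′,α}(M⋆)^{1/(l′+N+α)}, where M⋆ = B_{R⋆}^+ is the half-ball centered at the origin with μ_{l,α}(M⋆) = μ_{l,α}(M). Equivalently, μ_{l′,α}(M) ≤ μ_{l′,α}(M⋆). -/

import Mathlib

open MeasureTheory ENNReal Set Filter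
open scoped Topology NNReal

noncomputable section

abbrev Euc (N : ℕ) := EuclideanSpace ℝ (Fin N)

/-- The last coordinate `x_N` of a point of `ℝ^N`. -/
def lastCoord (N : ℕ) (x : Euc N) : ℝ := if h : 0 < N then x ⟨N - 1, by omega⟩ else 0

/-- The open upper half-space `ℝ^N_+ = {x : x_N > 0}`. -/
def upperHalf (N : ℕ) : Set (Euc N) := {x | 0 < lastCoord N x}

/-- The open half-ball `B_R^+ = {x : |x| < R, x_N > 0}`. -/
def halfBall (N : ℕ) (R : ℝ) : Set (Euc N) := {x | ‖x‖ < R ∧ 0 < lastCoord N x}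

/-- The weight `|x|^k x_N^α`. -/
def wt (N : ℕ) (k α : ℝ) (x : Euc N) : ℝ := ‖x‖ ^ k * lastCoord N x ^ α

/-- The weighted measure `μ_{l,α}(M) = ∫_M |x|^l x_N^α dx` of a set `M ⊆ ℝ^N_+`. -/
def wMeas (N : ℕ) (l α : ℝ) (M : Set (Euc N)) : ℝ≥0∞ :=
  ∫⁻ x in M, ENNReal.ofReal (wt N l α x)

/-- The divergence of a vector field on `ℝ^N`. -/
def vdiv (N : ℕ) (F : Euc N → Euc N) (x : Euc N) : ℝ :=
  ∑ i, fderiv ℝ F x (EuclideanSpace.single i 1) i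

/-- The weighted perimeter `P_{μ_{k,α}}(M)`. -/
def wPerim (N : ℕ) (k α : ℝ) (M : Set (Euc N)) : ℝ≥0∞ :=
  ⨆ v : {v : Euc N → Euc N // ContDiff ℝ 1 v ∧ HasCompactSupport v ∧ ∀ x ∈ M, ‖v x‖ ≤ 1},
    ENNReal.ofReal (∫ x in M, vdiv N (fun y => wt N k α y • v.1 y) x)

/-- A bounded open set with smooth boundary. -/
def IsSmoothBoundedDomain (N : ℕ) (Ω : Set (Euc N)) : Prop :=
  IsOpen Ω ∧ Bornology.IsBounded Ω ∧
    ∃ f : Euc N → ℝ, ContDiff ℝ (⊤ : ℕ∞) f ∧ Ω = {x | f x < 0} ∧ frontier Ω = {x | f x = 0} ∧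
      ∀ x ∈ frontier Ω, fderiv ℝ f x ≠ 0

/-- The Beta function `B(a,b) = Γ(a)Γ(b)/Γ(a+b)`. -/
def betaFn (a b : ℝ) : ℝ := Real.Gamma a * Real.Gamma b / Real.Gamma (a + b)

/-- The explicit isoperimetric constant `C^{rad}_{k,l,N,α}`. -/
def Crad (N : ℕ) (k l α : ℝ) : ℝ :=
  (l + α + N) ^ ((k + N + α - 1) / (l + N + α)) *
    (betaFn (((N : ℝ) - 1) / 2) ((α + 1) / 2) * Real.pi ^ (((N : ℝ) - 1) / 2) /
        Real.Gamma (((N : ℝ) - 1) / 2)) ^ ((l - k + 1) / (l + N + α))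

/-- The exponent in the isoperimetric inequality. -/
def isoExp (N : ℕ) (k l α : ℝ) : ℝ := (k + N + α - 1) / (l + N + α)

/-- Distribution function of `u` on `Ω` relative to `μ_{m,α}`. -/
def distFn (N : ℕ) (m α : ℝ) (Ω : Set (Euc N)) (u : Euc N → ℝ) (t : ℝ) : ℝ≥0∞ :=
  wMeas N m α {x ∈ Ω | t < |u x|}

/-- Weighted decreasing rearrangement `u*`. -/
def rearr (N : ℕ) (m α : ℝ) (Ω : Set (Euc N)) (u : Euc N → ℝ) (s : ℝ≥0∞) : ℝ :=
  sSup {t : ℝ | 0 ≤ t ∧ s < distFn N m α Ω u t}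

/-- Weighted Schwarz symmetrization `u⋆(x) = u*(μ_{m,α}(B^+_{|x|}))`. -/
def symmFn (N : ℕ) (m α : ℝ) (Ω : Set (Euc N)) (u : Euc N → ℝ) (x : Euc N) : ℝ :=
  rearr N m α Ω u (wMeas N m α (halfBall N ‖x‖))

/-- `X`: C¹ functions on `Ω̄` vanishing near `∂Ω \ {x_N = 0}`. -/
def TestFn (N : ℕ) (Ω : Set (Euc N)) (v : Euc N → ℝ) : Prop :=
  ContDiff ℝ 1 v ∧ ∃ U : Set (Euc N), IsOpen U ∧ frontier Ω \ {x | lastCoord N x = 0} ⊆ U ∧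
    ∀ x ∈ U, v x = 0

/-- `u ∈ V²(Ω, dμ_{m,α})` with weak gradient `g`. -/
def MemV2 (N : ℕ) (m α : ℝ) (Ω : Set (Euc N)) (u : Euc N → ℝ) (g : Euc N → Euc N) : Prop :=
  (∀ φ : Euc N → ℝ, ContDiff ℝ (⊤ : ℕ∞) φ → HasCompactSupport φ → tsupport φ ⊆ Ω → ∀ i : Fin N,
      ∫ x in Ω, u x * fderiv ℝ φ x (EuclideanSpace.single i 1) = -∫ x in Ω, g x i * φ x) ∧
  (∫⁻ x in Ω, ENNReal.ofReal (u x ^ 2 * wt N m α x)) < ⊤ ∧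
  (∫⁻ x in Ω, ENNReal.ofReal (‖g x‖ ^ 2 * wt N m α x)) < ⊤ ∧
  ∃ v : ℕ → Euc N → ℝ, (∀ n, TestFn N Ω (v n)) ∧
    Tendsto (fun n => ∫⁻ x in Ω, ENNReal.ofReal ((v n x - u x) ^ 2 * wt N m α x)) atTop (𝓝 0) ∧
    Tendsto (fun n => ∫⁻ x in Ω, ENNReal.ofReal (‖gradient (v n) x - g x‖ ^ 2 * wt N m α x))
      atTop (𝓝 0)

/-- Ellipticity condition. -/
def Elliptic (N : ℕ) (m α : ℝ) (Ω : Set (Euc N)) (A : Euc N → Matrix (Fin N) (Fin N) ℝ)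
    (Λ : ℝ) : Prop :=
  (∀ x, (A x).IsSymm) ∧ (∀ i j, Measurable fun x => A x i j) ∧
    ∀ᵐ x ∂(volume.restrict Ω), ∀ ζ : Euc N,
      wt N m α x * ‖ζ‖ ^ 2 ≤ ∑ i, ∑ j, A x i j * ζ i * ζ j ∧
      ∑ i, ∑ j, A x i j * ζ i * ζ j ≤ Λ * (wt N m α x * ‖ζ‖ ^ 2)

/-- Weak solution of the mixed boundary value problem. -/
def IsWeakSol (N : ℕ) (m α : ℝ) (Ω : Set (Euc N)) (A : Euc N → Matrix (Fin N) (Fin N) ℝ)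
    (f : Euc N → ℝ) (u : Euc N → ℝ) (g : Euc N → Euc N) : Prop :=
  MemV2 N m α Ω u g ∧
    ∀ φ : Euc N → ℝ, ContDiff ℝ 1 φ → (∀ x ∈ frontier Ω \ {x | lastCoord N x = 0}, φ x = 0) →
      ∫ x in Ω, ∑ i, ∑ j, A x i j * g x j * fderiv ℝ φ x (EuclideanSpace.single i 1)
        = ∫ x in Ω, f x * φ x * wt N m α x

/-- The explicit radial solution of the symmetrized problem. -/
def wSol (N : ℕ) (m α : ℝ) (Ω : Set (Euc N)) (f : Euc N → ℝ) (rstar : ℝ) (x : Euc N) : ℝ :=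
  ∫ ρ in (‖x‖)..rstar,
    (∫ σ in (0:ℝ)..ρ, rearr N m α Ω f (wMeas N m α (halfBall N σ)) * σ ^ ((N : ℝ) - 1 + m + α)) *
      ρ ^ (1 - (N : ℝ) - m - α)

/-- comparison of ratios of weighted measures under symmetrization
(Hardy–Littlewood lemma): if `M⋆ = B_R^+` has the same `μ_{l,α}`-measure as `M`, then
`μ_{l,α}(M)^{1/(l+N+α)}/μ_{l',α}(M)^{1/(l'+N+α)}` is at least the corresponding ratio
for `M⋆`; equivalently `μ_{l',α}(M) ≤ μ_{l',α}(M⋆)`. -/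
theorem wMeas_ratio_ge_symmetrization
    (N : ℕ) (hN : 2 ≤ N) (α l l' : ℝ) (hα : 0 < α)
    (hl' : -(N : ℝ) - α < l') (hll' : l' < l)
    (M : Set (Euc N)) (hMmeas : MeasurableSet M) (hMsub : M ⊆ upperHalf N)
    (hM0 : 0 < wMeas N l α M) (hMfin : wMeas N l α M < ⊤)
    (R : ℝ) (hR : 0 < R) (hRstar : wMeas N l α (halfBall N R) = wMeas N l α M) :
    (wMeas N l α (halfBall N R)) ^ (1 / (l + N + α)) /
        (wMeas N l' α (halfBall N R)) ^ (1 / (l' + N + α))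
      ≤ (wMeas N l α M) ^ (1 / (l + N + α)) / (wMeas N l' α M) ^ (1 / (l' + N + α))
    ∧ wMeas N l' α M ≤ wMeas N l' α (halfBall N R) := by
  have hNpos : 0 < N := by omega
  set B := halfBall N R with hBdef
  have hlastc : Continuous (lastCoord N) := by
    have h : lastCoord N = fun x : Euc N =>
        EuclideanSpace.proj (𝕜 := ℝ) (⟨N - 1, by omega⟩ : Fin N) x := by
      funext x; simp [lastCoord, hNpos, EuclideanSpace.proj]
    rw [h]; exact (EuclideanSpace.proj _).continuous
  have hBmeas : MeasurableSet B := by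
    have h : B = {x : Euc N | ‖x‖ < R} ∩ {x : Euc N | 0 < lastCoord N x} := by
      ext x; simp [hBdef, halfBall]
    rw [h]
    exact ((isOpen_lt continuous_norm continuous_const).inter
      (isOpen_lt continuous_const hlastc)).measurableSet
  have hnormpos : ∀ x : Euc N, 0 < lastCoord N x → 0 < ‖x‖ := by
    intro x hx
    rcases eq_or_ne x 0 with rfl | h
    · exfalso
      have h0 : lastCoord N (0 : Euc N) = 0 := by simp [lastCoord, hNpos]
      rw [h0] at hx; exact lt_irrefl _ hx
    · exact norm_pos_iff.mpr h
  have hwtnn : ∀ (k : ℝ) (x : Euc N), 0 < lastCoord N x → 0 ≤ wt N k α x := fun k x hx =>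
    mul_nonneg (Real.rpow_nonneg (norm_nonneg x) k) (Real.rpow_nonneg hx.le α)
  set c : ℝ≥0∞ := ENNReal.ofReal (R ^ (l' - l)) with hcdef
  -- pointwise splitting of the weight
  have hsplit : ∀ x : Euc N, 0 < lastCoord N x →
      wt N l' α x = ‖x‖ ^ (l' - l) * wt N l α x := by
    intro x hx
    have h1 : 0 < ‖x‖ := hnormpos x hx
    unfold wt
    rw [← mul_assoc, ← Real.rpow_add h1]
    ring_nf
  -- pointwise inequality on B (where ‖x‖ ≤ R)
  have hptB : ∀ x : Euc N, 0 < lastCoord N x → ‖x‖ ≤ R →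
      c * ENNReal.ofReal (wt N l α x) ≤ ENNReal.ofReal (wt N l' α x) := by
    intro x hx hxR
    rw [hcdef, ← ENNReal.ofReal_mul (Real.rpow_nonneg hR.le _)]
    apply ENNReal.ofReal_le_ofReal
    rw [hsplit x hx]
    exact mul_le_mul_of_nonneg_right
      (Real.rpow_le_rpow_of_nonpos (hnormpos x hx) hxR (by linarith)) (hwtnn l x hx)
  -- pointwise inequality off B (where R ≤ ‖x‖)
  have hptO : ∀ x : Euc N, 0 < lastCoord N x → R ≤ ‖x‖ →
      ENNReal.ofReal (wt N l' α x) ≤ c * ENNReal.ofReal (wt N l α x) := by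
    intro x hx hxR
    rw [hcdef, ← ENNReal.ofReal_mul (Real.rpow_nonneg hR.le _)]
    apply ENNReal.ofReal_le_ofReal
    rw [hsplit x hx]
    exact mul_le_mul_of_nonneg_right
      (Real.rpow_le_rpow_of_nonpos hR hxR (by linarith)) (hwtnn l x hx)
  -- set decompositions for the μ_{l,α} integral
  have hML : wMeas N l α (M ∩ B) + wMeas N l α (M \ B) = wMeas N l α M :=
    lintegral_inter_add_diff _ M hBmeas
  have hBL : wMeas N l α (B ∩ M) + wMeas N l α (B \ M) = wMeas N l α B :=
    lintegral_inter_add_diff _ B hMmeas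
  have hML' : wMeas N l' α (M ∩ B) + wMeas N l' α (M \ B) = wMeas N l' α M :=
    lintegral_inter_add_diff _ M hBmeas
  have hBL' : wMeas N l' α (B ∩ M) + wMeas N l' α (B \ M) = wMeas N l' α B :=
    lintegral_inter_add_diff _ B hMmeas
  have hfin : wMeas N l α (M ∩ B) ≠ ⊤ := by
    refine ne_top_of_le_ne_top hMfin.ne ?_
    rw [← hML]; exact le_self_add
  -- equality of the symmetric differences
  have hdiffeq : wMeas N l α (M \ B) = wMeas N l α (B \ M) := by
    have h1 : wMeas N l α (M ∩ B) + wMeas N l α (M \ B)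
        = wMeas N l α (M ∩ B) + wMeas N l α (B \ M) := by
      rw [hML, Set.inter_comm M B, hBL, hRstar]
    exact (ENNReal.add_right_inj hfin).mp h1
  -- integral comparisons
  have hcmp1 : wMeas N l' α (M \ B) ≤ c * wMeas N l α (M \ B) := by
    unfold wMeas
    rw [← lintegral_const_mul' c _ ENNReal.ofReal_ne_top]
    refine setLIntegral_mono' (hMmeas.diff hBmeas) ?_
    intro x hx
    have hup : 0 < lastCoord N x := hMsub hx.1
    have hxR : R ≤ ‖x‖ := by
      by_contra h
      exact hx.2 ⟨not_le.mp h, hup⟩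
    exact hptO x hup hxR
  have hcmp2 : c * wMeas N l α (B \ M) ≤ wMeas N l' α (B \ M) := by
    unfold wMeas
    rw [← lintegral_const_mul' c _ ENNReal.ofReal_ne_top]
    refine setLIntegral_mono' (hBmeas.diff hMmeas) ?_
    intro x hx
    exact hptB x hx.1.2 hx.1.1.le
  -- the main inequality
  have hmain : wMeas N l' α M ≤ wMeas N l' α B := by
    calc wMeas N l' α M = wMeas N l' α (M ∩ B) + wMeas N l' α (M \ B) := hML'.symm
      _ ≤ wMeas N l' α (M ∩ B) + c * wMeas N l α (M \ B) := add_le_add le_rfl hcmp1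
      _ = wMeas N l' α (B ∩ M) + c * wMeas N l α (B \ M) := by
          rw [Set.inter_comm M B, hdiffeq]
      _ ≤ wMeas N l' α (B ∩ M) + wMeas N l' α (B \ M) := add_le_add le_rfl hcmp2
      _ = wMeas N l' α B := hBL'
  refine ⟨?_, hmain⟩
  rw [hRstar]
  have hq : (0 : ℝ) ≤ 1 / (l' + N + α) := by
    have : 0 < l' + N + α := by linarith
    positivity
  exact ENNReal.div_le_div_left (ENNReal.rpow_le_rpow hmain hq) _

end
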